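/- Let 𝒜 = ℂ[E₁,E₂,A₀,A₁] with the derivation f as above and v = A₀ − (1/2)E₁A₁. If m ≥ n ≥ 0 are natural numbers with m − n even, then f^{m−n+1}(A₁^m·v^n) = 0. -/
import Mathlib


open MvPolynomial

noncomputable section SkeinAux
open Finset

abbrev R4 := MvPolynomial (Fin 4) ℂ

/-- the doubled derivation `2f` transported through `E₁ = a+b`, `E₂ = ab`. -/
def gD : Derivation ℂ R4 R4 := mkDerivation ℂ
  ![2 * X 0 ^ 2, 2 * X 1 ^ 2, (X 0 + X 1) * X 2 - 2 * (X 0 * X 1) * X 3,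
    -((X 0 + X 1) * X 3)]

lemma gD_X0 : gD (X 0) = 2 * X 0 ^ 2 := by simp [gD, mkDerivation_X]
lemma gD_X1 : gD (X 1) = 2 * X 1 ^ 2 := by simp [gD, mkDerivation_X]
lemma gD_X2 : gD (X 2) = (X 0 + X 1) * X 2 - 2 * (X 0 * X 1) * X 3 := by
  simp [gD, mkDerivation_X]
lemma gD_X3 : gD (X 3) = -((X 0 + X 1) * X 3) := by simp [gD, mkDerivation_X]

lemma D_scale {A : Type*} [CommRing A] [Algebra ℂ A] (D : Derivation ℂ A A) (x c : A)
    (h : D x = c * x) (n : ℕ) : D (x ^ n) = n • (c * x ^ n) := by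
  induction n with
  | zero => simp
  | succ n ih =>
      rw [pow_succ, Derivation.leibniz, ih, h, smul_eq_mul, smul_eq_mul, succ_nsmul]
      simp only [nsmul_eq_mul]
      ring

lemma hsm (c : ℂ) (p : R4) : c • p = C c * p := (C_mul' (a := c) (p := p)).symm

lemma gD_mono (i j : ℕ) : gD (X 0 ^ i * X 1 ^ j) =
    (2*(i:ℂ)) • (X 0 ^ (i+1) * X 1 ^ j) + (2*(j:ℂ)) • (X 0 ^ i * X 1 ^ (j+1)) := by
  rw [Derivation.leibniz, D_scale gD (X 0) (2 * X 0) (by rw [gD_X0]; ring) i,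
    D_scale gD (X 1) (2 * X 1) (by rw [gD_X1]; ring) j]
  simp only [smul_eq_mul, nsmul_eq_mul]
  simp only [hsm, map_mul, map_ofNat, map_natCast]
  ring

def dd (k i : ℕ) : ℂ := (k.descFactorial i : ℂ)

lemma dd_succ (k i : ℕ) : dd k (i+1) = ((k:ℂ) - i) * dd k i := by
  rcases le_or_gt i k with h | h
  · rw [dd, dd, Nat.descFactorial_succ, Nat.cast_mul, Nat.cast_sub h]
  · rw [dd, dd, Nat.descFactorial_of_lt h, Nat.descFactorial_of_lt (h.trans (Nat.lt_succ_self i))]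
    simp

def cf (k r i : ℕ) : ℂ := 2^r * (r.choose i : ℂ) * dd k i * dd k (r-i)

def PP (k r : ℕ) : R4 := ∑ i ∈ range (r+1), C (cf k r i) * (X 0 ^ i * X 1 ^ (r-i))

def e1 (k r i : ℕ) : ℂ := 2^(r+1) * (r.choose i : ℂ) * dd k (i+1) * dd k (r-i)
def e2 (k r i : ℕ) : ℂ := 2^(r+1) * (r.choose i : ℂ) * dd k i * dd k (r-i+1)

lemma coeff1 (k r i : ℕ) (h : i ≤ r) : cf k (r+1) (i+1) = e1 k r i + e2 k r (i+1) := by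
  rcases lt_or_eq_of_le h with h | h
  · have h1 : r + 1 - (i+1) = r - i := by omega
    have h2 : r - (i+1) + 1 = r - i := by omega
    rw [cf, e1, e2, h1, h2, Nat.choose_succ_succ, Nat.cast_add]
    ring
  · subst h
    rw [cf, e1, e2]
    simp [Nat.choose_self, Nat.choose_succ_self, Nat.sub_self]

lemma coeff0 (k r : ℕ) : cf k (r+1) 0 = e2 k r 0 := by
  rw [cf, e2]; simp

lemma e2_top (k r : ℕ) : e2 k r (r+1) = 0 := by
  rw [e2, Nat.choose_succ_self]; simp

lemma ec1 (k r i : ℕ) : 2*(k:ℂ) * cf k r i - 2*(i:ℂ) * cf k r i = e1 k r i := by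
  rw [e1, cf, dd_succ]; ring

lemma ec2 (k r i : ℕ) : 2*(k:ℂ) * cf k r i - 2*((r-i : ℕ):ℂ) * cf k r i = e2 k r i := by
  rw [e2, cf, dd_succ]; ring

lemma step_A (k r : ℕ) :
    C (2*(k:ℂ)) * ((X 0 + X 1) * PP k r) - gD (PP k r) =
      (∑ i ∈ range (r+1), C (e1 k r i) * (X 0 ^ (i+1) * X 1 ^ (r-i))) +
      (∑ i ∈ range (r+1), C (e2 k r i) * (X 0 ^ i * X 1 ^ (r-i+1))) := by
  have hg : gD (PP k r) = ∑ i ∈ range (r+1), C (cf k r i) *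
      ((2*(i : ℂ)) • (X 0 ^ (i+1) * X 1 ^ (r-i)) +
       (2*((r-i : ℕ) : ℂ)) • (X 0 ^ i * X 1 ^ (r-i+1))) := by
    rw [PP, map_sum]
    refine Finset.sum_congr rfl (fun i _ => ?_)
    rw [← hsm, Derivation.map_smul, gD_mono, hsm]
  rw [hg, PP, Finset.mul_sum, Finset.mul_sum, ← Finset.sum_sub_distrib, ← Finset.sum_add_distrib]
  refine Finset.sum_congr rfl (fun i _ => ?_)
  rw [← ec1 k r i, ← ec2 k r i]
  simp only [hsm, map_sub, map_mul]
  ring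

lemma step_B (k r : ℕ) :
    PP k (r+1) =
      (∑ i ∈ range (r+1), C (e1 k r i) * (X 0 ^ (i+1) * X 1 ^ (r-i))) +
      (∑ i ∈ range (r+1), C (e2 k r i) * (X 0 ^ i * X 1 ^ (r-i+1))) := by
  rw [PP, Finset.sum_range_succ' _ (r+1)]
  rw [Finset.sum_range_succ' (fun i => C (e2 k r i) * (X 0 ^ i * X 1 ^ (r-i+1))) r]
  have he2 : ∑ i ∈ range r, C (e2 k r (i+1)) * (X 0 ^ (i+1) * X 1 ^ (r-(i+1)+1)) =
      (∑ i ∈ range (r+1), C (e2 k r (i+1)) * (X 0 ^ (i+1) * X 1 ^ (r-i)) : R4) := by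
    rw [Finset.sum_range_succ, e2_top]
    simp only [map_zero, zero_mul, add_zero]
    refine Finset.sum_congr rfl (fun i hi => ?_)
    have : r - (i+1) + 1 = r - i := by
      have := Finset.mem_range.mp hi; omega
    rw [this]
  have h0 : ∀ i ∈ range (r+1), C (cf k (r+1) (i+1)) * (X 0 ^ (i+1) * X 1 ^ (r+1-(i+1))) =
      (C (e1 k r i) * (X 0 ^ (i+1) * X 1 ^ (r-i)) +
      C (e2 k r (i+1)) * (X 0 ^ (i+1) * X 1 ^ (r-i)) : R4) := by
    intro i hi
    have hir : i ≤ r := by have := Finset.mem_range.mp hi; omega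
    rw [Nat.succ_sub_succ, coeff1 k r i hir, map_add]
    ring
  rw [Finset.sum_congr rfl h0, coeff0, he2, Finset.sum_add_distrib]
  simp only [Nat.sub_zero, pow_zero, one_mul]
  ring

lemma PP_succ (k r : ℕ) :
    PP k (r+1) = C (2*(k:ℂ)) * ((X 0 + X 1) * PP k r) - gD (PP k r) := by
  rw [step_A, step_B]

lemma PP_top (k : ℕ) : PP k (2*k+1) = 0 := by
  rw [PP]
  apply Finset.sum_eq_zero
  intro i hi
  have hz : cf k (2*k+1) i = 0 := by
    rw [cf]
    rcases le_or_gt i k with h | h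
    · have h2 : k < 2*k+1-i := by omega
      have h3 : dd k (2*k+1-i) = 0 := by rw [dd, Nat.descFactorial_of_lt h2]; simp
      rw [h3, mul_zero]
    · have h2 : dd k i = 0 := by rw [dd, Nat.descFactorial_of_lt h]; simp
      rw [h2]
      ring
  rw [hz, map_zero, zero_mul]

lemma gD_iter (k : ℕ) (w : R4) (hw : gD w = -(C (2*(k:ℂ)) * ((X 0 + X 1) * w))) (r : ℕ) :
    (gD.toLinearMap ^ r) w = ((-1:ℂ)^r) • (PP k r * w) := by
  induction r with
  | zero => simp [PP, cf, dd]
  | succ r ih =>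
      rw [pow_succ', Module.End.mul_apply, ih]
      simp only [Derivation.coeFn_coe]
      rw [Derivation.map_smul, Derivation.leibniz, hw, PP_succ]
      simp only [smul_eq_mul, hsm, map_sub, map_mul, map_pow, map_neg, map_one]
      ring

lemma gD_kills (k : ℕ) (w : R4) (hw : gD w = -(C (2*(k:ℂ)) * ((X 0 + X 1) * w))) :
    (gD.toLinearMap ^ (2*k+1)) w = 0 := by
  rw [gD_iter k w hw, PP_top, zero_mul, smul_zero]


def phim : R4 →ₐ[ℂ] R4 := aeval ![X 0 + X 1, X 0 * X 1, X 2, X 3]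

lemma phim_X0 : phim (X 0) = X 0 + X 1 := by simp [phim]
lemma phim_X1 : phim (X 1) = X 0 * X 1 := by simp [phim]
lemma phim_X2 : phim (X 2) = X 2 := by simp [phim]
lemma phim_X3 : phim (X 3) = X 3 := by simp [phim]

lemma comm_phi (F : Derivation ℂ R4 R4) (hgen : ∀ i, phim (F (X i)) = gD (phim (X i)))
    (p : R4) : phim (F p) = gD (phim p) := by
  induction p using MvPolynomial.induction_on with
  | C a =>
      rw [show (C a : R4) = algebraMap ℂ R4 a from rfl, Derivation.map_algebraMap, map_zero,
        AlgHom.commutes, Derivation.map_algebraMap]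
  | add p q hp hq => simp [hp, hq]
  | mul_X p i hp =>
      rw [Derivation.leibniz, map_add, map_mul]
      simp only [smul_eq_mul, map_mul, hp, hgen i, Derivation.leibniz, smul_eq_mul]

lemma comm_iter (F : Derivation ℂ R4 R4) (h : ∀ p, phim (F p) = gD (phim p)) (r : ℕ) :
    ∀ p : R4, phim ((F.toLinearMap ^ r) p) = (gD.toLinearMap ^ r) (phim p) := by
  induction r with
  | zero => simp
  | succ r ih =>
      intro p
      rw [pow_succ, Module.End.mul_apply, pow_succ, Module.End.mul_apply]
      simp only [Derivation.coeFn_coe]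
      rw [ih (F p), h p]

lemma eval_phim (p : R4) (x y : Fin 4 → ℂ)
    (h0 : y 0 + y 1 = x 0) (h1 : y 0 * y 1 = x 1) (h2 : y 2 = x 2) (h3 : y 3 = x 3) :
    eval y (phim p) = eval x p := by
  have key : (aeval y : R4 →ₐ[ℂ] ℂ) (phim p)
      = aeval (fun i => (aeval y : R4 →ₐ[ℂ] ℂ) (![X 0 + X 1, X 0 * X 1, X 2, X 3] i)) p :=
    comp_aeval_apply (f := ![X 0 + X 1, X 0 * X 1, X 2, X 3]) (aeval y) p
  have hy : ∀ q : R4, (aeval y : R4 →ₐ[ℂ] ℂ) q = eval y q := fun q => by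
    rw [← coe_aeval_eq_eval]; rfl
  have hx : ∀ q : R4, (aeval x : R4 →ₐ[ℂ] ℂ) q = eval x q := fun q => by
    rw [← coe_aeval_eq_eval]; rfl
  rw [← hy, key]
  have : (fun i => (aeval y : R4 →ₐ[ℂ] ℂ) (![X 0 + X 1, X 0 * X 1, X 2, X 3] i)) = x := by
    funext i
    fin_cases i <;> simp [h0, h1, h2, h3]
  rw [this, hx]

lemma phim_inj (p : R4) (h : phim p = 0) : p = 0 := by
  refine MvPolynomial.funext (fun x => ?_)
  obtain ⟨z, hz⟩ := IsAlgClosed.exists_pow_nat_eq ((x 0)^2 - 4 * x 1) (n := 2) (by norm_num)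
  have key := eval_phim p x ![(x 0 + z)/2, (x 0 - z)/2, x 2, x 3]
    (by simp; ring) (by simp; linear_combination (-(1:ℂ)/4) * hz) (by simp) (by simp)
  rw [h, map_zero] at key
  simp [← key]

def u2 : R4 := 2 * X 2 - (X 0 + X 1) * X 3

lemma gD_two_mul (q : R4) : gD (2 * q) = 2 * gD q := by
  rw [show (2 : R4) * q = (2:ℂ) • q from by rw [hsm, map_ofNat], Derivation.map_smul,
    hsm, map_ofNat]

lemma gD_u2 : gD u2 = (X 0 + X 1) * u2 := by
  rw [u2, map_sub, gD_two_mul, Derivation.leibniz, map_add, gD_X0, gD_X1, gD_X2, gD_X3]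
  simp only [smul_eq_mul]
  ring

lemma gD_w (M N : ℕ) : gD (X 3 ^ M * u2 ^ N) =
    ((N:ℂ) - (M:ℂ)) • ((X 0 + X 1) * (X 3 ^ M * u2 ^ N)) := by
  rw [Derivation.leibniz,
    D_scale gD (X 3) (-(X 0 + X 1)) (by rw [gD_X3]; ring) M,
    D_scale gD u2 (X 0 + X 1) gD_u2 N]
  simp only [smul_eq_mul, nsmul_eq_mul]
  simp only [hsm, map_sub, map_natCast]
  ring

end SkeinAux

/-- In `𝒜 = ℂ[E₁,E₂,A₀,A₁]` with the derivation `f` as in the skein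
lasagna module of `B² × S²` and `v = A₀ - (1/2)E₁A₁`, if `m ≥ n ≥ 0` with `m - n` even,
then `f^(m-n+1)(A₁^m vⁿ) = 0`. Here `E₁ = X 0`, `E₂ = X 1`, `A₀ = X 2`, `A₁ = X 3`. -/
theorem f_iterate_kills_A1m_vn
    (f : Derivation ℂ (MvPolynomial (Fin 4) ℂ) (MvPolynomial (Fin 4) ℂ))
    (hf1 : f (X 0) = X 0 ^ 2 - 2 * X 1) (hf2 : f (X 1) = X 0 * X 1)
    (hf3 : f (X 2) = (1 / 2 : ℂ) • (X 0 * X 2) - X 1 * X 3)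
    (hf4 : f (X 3) = -((1 / 2 : ℂ) • (X 0 * X 3)))
    (v : MvPolynomial (Fin 4) ℂ) (hv : v = X 2 - (1 / 2 : ℂ) • (X 0 * X 3))
    (m n : ℕ) (hmn : n ≤ m) (heven : Even (m - n)) :
    (f.toLinearMap ^ (m - n + 1)) (X 3 ^ m * v ^ n) = 0 := by
  obtain ⟨k, hk⟩ := heven
  have hm : m = n + 2*k := by omega
  set F : Derivation ℂ R4 R4 := (2:ℂ) • f with hF
  have hFp : ∀ p : R4, F p = (2:ℂ) • f p := fun p => rfl
  have hgen : ∀ i : Fin 4, phim (F (X i)) = gD (phim (X i)) := by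
    intro i
    fin_cases i
    · show phim (F (X 0)) = gD (phim (X 0))
      rw [hFp, hf1, map_smul, map_sub, map_pow, map_mul, map_ofNat, phim_X0, phim_X1,
        map_add, gD_X0, gD_X1, hsm, map_ofNat]
      ring
    · show phim (F (X 1)) = gD (phim (X 1))
      rw [hFp, hf2, map_smul, map_mul, phim_X0, phim_X1, Derivation.leibniz, gD_X0, gD_X1,
        hsm, map_ofNat]
      simp only [smul_eq_mul]
      ring
    · show phim (F (X 2)) = gD (phim (X 2))
      rw [hFp, hf3, map_smul, map_sub, map_smul, map_mul, map_mul, phim_X0, phim_X1,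
        phim_X2, phim_X3, smul_sub, smul_smul, gD_X2]
      norm_num
      rw [hsm, map_ofNat]
      ring
    · show phim (F (X 3)) = gD (phim (X 3))
      rw [hFp, hf4, map_smul, map_neg, map_smul, map_mul, phim_X0, phim_X3, smul_neg,
        smul_smul, gD_X3]
      norm_num
  have hcomm := comm_phi F hgen
  have hphiv : phim v = (1/2:ℂ) • u2 := by
    rw [hv, map_sub, map_smul, map_mul, phim_X0, phim_X2, phim_X3, u2, smul_sub,
      show ((2:R4)) * X 2 = (2:ℂ) • X 2 from by rw [hsm, map_ofNat], smul_smul]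
    norm_num
  have hphiw : phim (X 3 ^ m * v ^ n) = ((1/2:ℂ)^n) • (X 3 ^ m * u2 ^ n) := by
    rw [map_mul, map_pow, map_pow, phim_X3, hphiv, smul_pow, mul_smul_comm]
  have hgw : gD (X 3 ^ m * u2 ^ n) = -(C (2*(k:ℂ)) * ((X 0 + X 1) * (X 3 ^ m * u2 ^ n))) := by
    rw [gD_w, show ((n:ℂ) - (m:ℂ)) = -(2*(k:ℂ)) from by rw [hm]; push_cast; ring,
      neg_smul, hsm]
  have hkill := gD_kills k _ hgw
  have hr : m - n + 1 = 2*k + 1 := by omega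
  have hzero : phim ((F.toLinearMap ^ (m-n+1)) (X 3 ^ m * v ^ n)) = 0 := by
    rw [comm_iter F hcomm, hphiw, map_smul, hr, hkill, smul_zero]
  have hpow : ∀ r : ℕ, ∀ p : R4, (F.toLinearMap ^ r) p = ((2:ℂ)^r) • ((f.toLinearMap ^ r) p) := by
    intro r
    induction r with
    | zero => intro p; simp
    | succ r ih =>
        intro p
        rw [pow_succ F.toLinearMap r, Module.End.mul_apply, pow_succ f.toLinearMap r,
          Module.End.mul_apply, ih,
          show (F.toLinearMap p) = (2:ℂ) • f.toLinearMap p from hFp p, map_smul,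
          smul_smul, pow_succ]
  have h2 : phim ((f.toLinearMap ^ (m-n+1)) (X 3 ^ m * v ^ n)) = 0 := by
    have hne : ((2:ℂ)^(m-n+1)) ≠ 0 := by norm_num
    rw [hpow, map_smul] at hzero
    exact (smul_eq_zero.mp hzero).resolve_left hne
  exact phim_inj _ h2
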